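/- Let b(s) = s^{−1}·e^{−1/s} for s > 0. Then ∫_0^s b(r)² dr = e^{−2/s}/2 for every s > 0, the integrand b(s)/(∫_0^s b(r)² dr)^{1/2} equals √2/s, and consequently ∫_0^t b(s)·(∫_0^s b(r)² dr)^{−1/2} ds = ∞ for every t > 0; in particular the associated order-one Goursat kernel k(u,v) = b(u)·b(v)/∫_0^u b(r)² dr fails the square-integrability condition ∫_0^t (∫_0^u k(u,v)² dv)^{1/2} du < ∞. -/

import Mathlib

open MeasureTheory Filter Topology

lemma exp_bound' {r : ℝ} (hr : 0 < r) : Real.exp (-(2/r)) ≤ r ^ 2 := by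
  have h1 : (1:ℝ)/r ≤ Real.exp (1/r) := le_trans (by linarith) (Real.add_one_le_exp _)
  have h2 : (1:ℝ)/r^2 ≤ Real.exp (2/r) := by
    have h3 : Real.exp (1/r) ^ 2 = Real.exp (2/r) := by
      rw [← Real.exp_nat_mul]; ring_nf
    calc (1:ℝ)/r^2 = (1/r)^2 := by rw [div_pow, one_pow]
      _ ≤ Real.exp (1/r) ^ 2 := by have := one_div_pos.mpr hr; gcongr
      _ = Real.exp (2/r) := h3
  calc Real.exp (-(2/r)) = (Real.exp (2/r))⁻¹ := Real.exp_neg _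
    _ ≤ ((1:ℝ)/r^2)⁻¹ := inv_anti₀ (by positivity) h2
    _ = r ^ 2 := by simp

lemma sq_int' (b : ℝ → ℝ) (hb : ∀ s > (0 : ℝ), b s = s⁻¹ * Real.exp (-(1 / s)))
    {s : ℝ} (hs : 0 < s) :
    (∫ r in Set.Ioc 0 s, (b r) ^ 2) = Real.exp (-(2 / s)) / 2 := by
  set F : ℝ → ℝ := fun r => if r ≤ 0 then 0 else Real.exp (-(2 / r)) / 2 with hF
  have hbsq : ∀ r ∈ Set.Ioc (0:ℝ) s, (b r) ^ 2 = r⁻¹ ^ 2 * Real.exp (-(2 / r)) := by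
    intro r hr
    rw [hb r hr.1, mul_pow, sq (Real.exp _), ← Real.exp_add]
    congr 1
    ring
  have hint : IntegrableOn (fun r => (b r) ^ 2) (Set.Ioc 0 s) := by
    rw [integrableOn_congr_fun (g := fun r => r⁻¹ ^ 2 * Real.exp (-(2 / r)))
      (fun r hr => hbsq r hr) measurableSet_Ioc]
    apply Measure.integrableOn_of_bounded (M := 1)
    · simp [measure_Ioc_lt_top.ne]
    · exact ((measurable_inv.pow_const 2).mul
        (Real.measurable_exp.comp ((measurable_const.div measurable_id).neg))).aestronglyMeasurable
    · filter_upwards [ae_restrict_mem measurableSet_Ioc] with r hr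
      have h1 : Real.exp (-(2 / r)) ≤ r ^ 2 := exp_bound' hr.1
      rw [Real.norm_eq_abs, abs_of_nonneg (by positivity)]
      calc r⁻¹ ^ 2 * Real.exp (-(2 / r)) ≤ r⁻¹ ^ 2 * r ^ 2 := by
            have : (0:ℝ) ≤ r⁻¹ ^ 2 := by positivity
            gcongr
        _ = 1 := by rw [← mul_pow, inv_mul_cancel₀ hr.1.ne', one_pow]
  have hderiv : ∀ x ∈ Set.Ioo (0:ℝ) s, HasDerivWithinAt F ((b x)^2) (Set.Ioi x) x := by
    intro x hx
    have hx0 : (0:ℝ) < x := hx.1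
    have h1 : HasDerivAt (fun r : ℝ => r⁻¹) (-(x^2)⁻¹) x := hasDerivAt_inv hx0.ne'
    have h2 : HasDerivAt (fun r : ℝ => -(2/r)) (2 * (x^2)⁻¹) x := by
      have := (h1.const_mul 2).neg
      simp only [div_eq_mul_inv]
      exact this.congr_deriv (by ring)
    have h3 : HasDerivAt (fun r : ℝ => Real.exp (-(2/r)) / 2)
        (Real.exp (-(2/x)) * (2 * (x^2)⁻¹) / 2) x := h2.exp.div_const 2
    have h4 : Real.exp (-(2/x)) * (2 * (x^2)⁻¹) / 2 = (b x)^2 := by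
      rw [hbsq x ⟨hx0, hx.2.le⟩]
      field_simp
    rw [h4] at h3
    have heq : (fun r : ℝ => Real.exp (-(2/r)) / 2) =ᶠ[nhds x] F := by
      filter_upwards [Ioi_mem_nhds hx0] with r hr
      simp [hF, not_le.mpr (Set.mem_Ioi.mp hr)]
    exact (h3.congr_of_eventuallyEq heq.symm).hasDerivWithinAt
  have hcont : ContinuousOn F (Set.Icc 0 s) := by
    intro x hx
    rcases eq_or_lt_of_le hx.1 with h | h
    · subst h
      have hF0 : F 0 = 0 := by simp [hF]
      unfold ContinuousWithinAt
      rw [hF0]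
      apply tendsto_of_tendsto_of_tendsto_of_le_of_le
        (g := fun _ => (0:ℝ)) (h := fun r => r^2/2)
      · exact tendsto_const_nhds
      · have : Filter.Tendsto (fun r : ℝ => r^2/2) (nhds 0) (nhds 0) := by
          have := ((continuous_pow 2).div_const 2).tendsto (0:ℝ)
          simpa using this
        exact this.mono_left nhdsWithin_le_nhds
      · intro r
        by_cases hr : r ≤ 0
        · simp [hF, hr]
        · simp only [hF, if_neg hr]
          positivity
      · intro r
        by_cases hr : r ≤ 0
        · simp only [hF, if_pos hr]
          positivity
        · simp only [hF, if_neg hr]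
          have := exp_bound' (not_le.mp hr)
          linarith
    · have heq : (fun r : ℝ => Real.exp (-(2/r)) / 2) =ᶠ[nhds x] F := by
        filter_upwards [Ioi_mem_nhds h] with r hr
        simp [hF, not_le.mpr (Set.mem_Ioi.mp hr)]
      have hc : ContinuousAt (fun r : ℝ => Real.exp (-(2/r)) / 2) x := by
        have h2 : ContinuousAt (fun r : ℝ => -(2/r)) x :=
          ((continuousAt_const.div continuousAt_id h.ne')).neg
        exact (Real.continuous_exp.continuousAt.comp h2).div_const 2
      exact (hc.congr heq).continuousWithinAt
  have hii : IntervalIntegrable (fun r => (b r)^2) MeasureTheory.volume 0 s :=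
    (intervalIntegrable_iff_integrableOn_Ioc_of_le hs.le).mpr hint
  have := intervalIntegral.integral_eq_sub_of_hasDeriv_right_of_le hs.le hcont hderiv hii
  rw [intervalIntegral.integral_of_le hs.le] at this
  rw [this]
  simp [hF, not_le.mpr hs]

lemma not_int_aux' {t : ℝ} (ht : 0 < t) :
    ¬ IntegrableOn (fun s : ℝ => Real.sqrt 2 / s) (Set.Ioc 0 t) := by
  intro h
  have h2 : IntegrableOn (fun s : ℝ => s⁻¹) (Set.Ioc 0 t) := by
    have := h.const_mul (Real.sqrt 2)⁻¹
    apply this.congr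
    filter_upwards with s
    rw [div_eq_mul_inv, ← mul_assoc, inv_mul_cancel₀ (by positivity : Real.sqrt 2 ≠ 0), one_mul]
  have h3 : IntegrableOn (fun s : ℝ => s ^ (-1:ℝ)) (Set.Ioo 0 t) := by
    rw [integrableOn_congr_fun (g := fun s : ℝ => s⁻¹)
      (fun s _ => by rw [show (-1:ℝ) = ((-1:ℤ):ℝ) by norm_num, Real.rpow_intCast, zpow_neg_one])
      measurableSet_Ioo]
    exact h2.mono_set Set.Ioo_subset_Ioc_self
  rw [intervalIntegral.integrableOn_Ioo_rpow_iff ht] at h3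
  linarith

theorem levy_example_fails_square_integrability
    (b : ℝ → ℝ)
    (hb : ∀ s > (0 : ℝ), b s = s⁻¹ * Real.exp (-(1 / s)))
    (k : ℝ → ℝ → ℝ)
    (hk : ∀ v u : ℝ, 0 < v → v ≤ u →
      k u v = b u * b v / ∫ r in Set.Ioc 0 u, (b r) ^ 2) :
    (∀ s > (0 : ℝ), (∫ r in Set.Ioc 0 s, (b r) ^ 2) = Real.exp (-(2 / s)) / 2) ∧
    (∀ s > (0 : ℝ),
      b s / Real.sqrt (∫ r in Set.Ioc 0 s, (b r) ^ 2) = Real.sqrt 2 / s) ∧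
    (∀ t > (0 : ℝ),
      ¬ IntegrableOn
        (fun s => b s / Real.sqrt (∫ r in Set.Ioc 0 s, (b r) ^ 2)) (Set.Ioc 0 t)) ∧
    (∀ t > (0 : ℝ),
      ¬ IntegrableOn
        (fun u => Real.sqrt (∫ v in Set.Ioc 0 u, (k u v) ^ 2)) (Set.Ioc 0 t)) := by
  have P1 : ∀ s > (0 : ℝ), (∫ r in Set.Ioc 0 s, (b r) ^ 2) = Real.exp (-(2 / s)) / 2 :=
    fun s hs => sq_int' b hb hs
  have P2 : ∀ s > (0 : ℝ),
      b s / Real.sqrt (∫ r in Set.Ioc 0 s, (b r) ^ 2) = Real.sqrt 2 / s := by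
    intro s hs
    rw [P1 s hs, hb s hs]
    set E := Real.exp (-(1/s)) with hE
    have hE0 : 0 < E := Real.exp_pos _
    have hsq : Real.exp (-(2/s)) = E ^ 2 := by
      rw [hE, sq, ← Real.exp_add]
      congr 1
      ring
    rw [hsq, Real.sqrt_div (sq_nonneg E), Real.sqrt_sq hE0.le]
    have hs2 : (0:ℝ) < Real.sqrt 2 := by positivity
    field_simp
  have P3 : ∀ t > (0 : ℝ),
      ¬ IntegrableOn
        (fun s => b s / Real.sqrt (∫ r in Set.Ioc 0 s, (b r) ^ 2)) (Set.Ioc 0 t) := by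
    intro t ht h
    apply not_int_aux' ht
    exact h.congr_fun (fun s hs => P2 s hs.1) measurableSet_Ioc
  refine ⟨P1, P2, P3, ?_⟩
  intro t ht h
  apply not_int_aux' ht
  apply h.congr_fun _ measurableSet_Ioc
  intro u hu
  have hu0 : 0 < u := hu.1
  set I := ∫ r in Set.Ioc 0 u, (b r) ^ 2 with hI
  have hIval : I = Real.exp (-(2/u)) / 2 := P1 u hu0
  have hIpos : 0 < I := by rw [hIval]; positivity
  have hbu : 0 < b u := by rw [hb u hu0]; positivity
  have hinner : (∫ v in Set.Ioc 0 u, (k u v) ^ 2) = (b u / I)^2 * I := by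
    have : (∫ v in Set.Ioc 0 u, (k u v) ^ 2)
        = ∫ v in Set.Ioc 0 u, (b u / I)^2 * (b v)^2 := by
      apply setIntegral_congr_fun measurableSet_Ioc
      intro v hv
      dsimp only
      rw [hk v u hv.1 hv.2, ← hI]
      field_simp
    rw [this, MeasureTheory.integral_const_mul, ← hI]
  dsimp only
  rw [hinner, Real.sqrt_mul (sq_nonneg _), Real.sqrt_sq_eq_abs,
    abs_of_pos (by positivity : 0 < b u / I)]
  have hsI : (0:ℝ) < Real.sqrt I := Real.sqrt_pos.mpr hIpos
  have : b u / I * Real.sqrt I = b u / Real.sqrt I := by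
    rw [eq_div_iff hsI.ne', div_mul_eq_mul_div, div_mul_eq_mul_div, mul_assoc,
      Real.mul_self_sqrt hIpos.le, mul_div_assoc, div_self hIpos.ne', mul_one]
  rw [this]
  exact P2 u hu0
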